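/- Let k01, k10 : ℝ → ℝ be continuous nonnegative functions with K = k01 + k10 strictly positive on a compact interval [a,b], ν = min_{v ∈ [a,b]} K(v) > 0, and let V : ℝ → ℝ be measurable with V_t ∈ [a,b] for all t ∈ ℝ. Then for every t ∈ ℝ the improper integral P̄_t = ∫_{−∞}^t exp(−∫_τ^t K(V_s) ds)·k01(V_τ) dτ converges, satisfies 0 ≤ P̄_t ≤ 1 for all t, the function P̄ solves the ODE Ṗ_t = k01(V_t) − K(V_t)·P_t on all of ℝ, and P̄ is the unique solution of this ODE that is defined and bounded on all of ℝ; moreover every solution started at any initial value P_{t₀} converges to P̄_t as t₀ → −∞. -/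

import Mathlib

open MeasureTheory Set Real Filter intervalIntegral

section dmsAux
variable {g : ℝ → ℝ} {ν M : ℝ} {A : ℝ → ℝ}

lemma aux_gInt (hg : Measurable g) (hgM : ∀ τ, |g τ| ≤ M) (s t : ℝ) :
    IntervalIntegrable g volume s t :=
  IntervalIntegrable.mono_fun' intervalIntegrable_const hg.aestronglyMeasurable
    (Filter.Eventually.of_forall fun τ => hgM τ)

lemma aux_bddIntegrableOn {f : ℝ → ℝ} (hf : AEStronglyMeasurable f volume) {C : ℝ}
    {S : Set ℝ} (hS : MeasurableSet S) (hSfin : volume S ≠ ⊤)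
    (hC : ∀ τ ∈ S, |f τ| ≤ C) : IntegrableOn f S := by
  have : IsFiniteMeasure (volume.restrict S) :=
    ⟨by rwa [Measure.restrict_apply_univ, lt_top_iff_ne_top]⟩
  exact Integrable.mono' (integrable_const C) hf.restrict
    ((ae_restrict_iff' hS).mpr (Filter.Eventually.of_forall hC))

lemma aux_A_sub (hg : Measurable g) (hgM : ∀ τ, |g τ| ≤ M)
    (hA : ∀ t, A t = ∫ s in (0:ℝ)..t, g s) (s t : ℝ) :
    A t - A s = ∫ τ in s..t, g τ := by
  rw [hA, hA,
    intervalIntegral.integral_interval_sub_left (aux_gInt hg hgM 0 t) (aux_gInt hg hgM 0 s)]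

lemma aux_A_lb (hg : Measurable g) (hgν : ∀ τ, ν ≤ g τ) (hgM : ∀ τ, |g τ| ≤ M)
    (hA : ∀ t, A t = ∫ s in (0:ℝ)..t, g s) {s t : ℝ} (hst : s ≤ t) :
    ν * (t - s) ≤ A t - A s := by
  rw [aux_A_sub hg hgM hA]
  calc ν * (t - s) = ∫ _ in s..t, ν := by
        rw [intervalIntegral.integral_const, smul_eq_mul, mul_comm]
    _ ≤ ∫ τ in s..t, g τ :=
        intervalIntegral.integral_mono_on hst intervalIntegrable_const
          (aux_gInt hg hgM s t) (fun x _ => hgν x)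

lemma aux_A_cont (hg : Measurable g) (hgM : ∀ τ, |g τ| ≤ M)
    (hA : ∀ t, A t = ∫ s in (0:ℝ)..t, g s) : Continuous A := by
  have := intervalIntegral.continuous_primitive (fun a b => aux_gInt hg hgM a b) (0 : ℝ)
  exact this.congr fun t => (hA t).symm

lemma aux_A_smono (hg : Measurable g) (hν0 : 0 < ν) (hgν : ∀ τ, ν ≤ g τ)
    (hgM : ∀ τ, |g τ| ≤ M) (hA : ∀ t, A t = ∫ s in (0:ℝ)..t, g s) : StrictMono A := by
  intro s t hst
  have := aux_A_lb hg hgν hgM hA hst.le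
  nlinarith [hν0, hst]

lemma aux_A_surj (hg : Measurable g) (hν0 : 0 < ν) (hgν : ∀ τ, ν ≤ g τ)
    (hgM : ∀ τ, |g τ| ≤ M) (hA : ∀ t, A t = ∫ s in (0:ℝ)..t, g s) :
    Function.Surjective A := by
  have hlb : ∀ s t : ℝ, s ≤ t → ν * (t - s) ≤ A t - A s := fun s t h => aux_A_lb hg hgν hgM hA h
  apply (aux_A_cont hg hgM hA).surjective
  · apply tendsto_atTop_mono' atTop (f₁ := fun t => A 0 + ν * t) ?_ ?_
    · filter_upwards [eventually_ge_atTop (0:ℝ)] with t ht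
      have := hlb 0 t ht; linarith
    · exact tendsto_atTop_add_const_left _ _ ((tendsto_const_mul_atTop_of_pos hν0).mpr tendsto_id)
  · apply tendsto_atBot_mono' atBot (f₁ := fun t => A 0 + ν * t) ?_ ?_
    · filter_upwards [eventually_le_atBot (0:ℝ)] with t ht
      have := hlb t 0 ht; nlinarith
    · exact tendsto_atBot_add_const_left _ _ ((tendsto_const_mul_atBot_of_pos hν0).mpr tendsto_id)

lemma aux_map (hg : Measurable g) (hν0 : 0 < ν) (hgν : ∀ τ, ν ≤ g τ) (hgM : ∀ τ, |g τ| ≤ M)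
    (hA : ∀ t, A t = ∫ s in (0:ℝ)..t, g s)
    (hsm : StrictMono A) (hsurj : Function.Surjective A) :
    Measure.map A (volume.withDensity (fun τ => ((g τ).toNNReal : ENNReal))) = volume := by
  set μ := volume.withDensity (fun τ => ((g τ).toNNReal : ENNReal)) with hμ
  have hAm : Measurable A := (hsm.monotone).measurable
  have hμIoc : ∀ x y : ℝ, x ≤ y → μ (Ioc x y) = ENNReal.ofReal (A y - A x) := by
    intro x y hxy
    rw [hμ, withDensity_apply _ measurableSet_Ioc]
    have h1 : ∀ᵐ τ ∂(volume.restrict (Ioc x y)), 0 ≤ g τ :=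
      Filter.Eventually.of_forall fun τ => (hν0.le.trans (hgν τ))
    have hInt : IntegrableOn g (Ioc x y) := by
      apply Integrable.mono' (integrable_const M) hg.aestronglyMeasurable.restrict
      exact Filter.Eventually.of_forall fun τ => hgM τ
    have h2 := ofReal_integral_eq_lintegral_ofReal hInt h1
    have h3 : ∀ τ : ℝ, ((g τ).toNNReal : ENNReal) = ENNReal.ofReal (g τ) := fun τ => rfl
    simp only [h3]
    rw [← h2, aux_A_sub hg hgM hA, ← intervalIntegral.integral_of_le hxy]
  let e : ℝ ≃o ℝ := StrictMono.orderIsoOfSurjective A hsm hsurj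
  have hce : (e : ℝ → ℝ) = A := StrictMono.coe_orderIsoOfSurjective A hsm hsurj
  refine Measure.ext_of_Ioc' _ _ ?_ ?_
  · intro u v _
    rw [Measure.map_apply hAm measurableSet_Ioc]
    have hpre : A ⁻¹' (Ioc u v) = Ioc (e.symm u) (e.symm v) := by
      rw [← hce]; exact e.preimage_Ioc u v
    rw [hpre, hμIoc _ _ ?_]
    · exact ENNReal.ofReal_ne_top
    · exact e.symm.monotone (le_of_lt ‹u < v›)
  · intro u v huv
    rw [Measure.map_apply hAm measurableSet_Ioc]
    have hpre : A ⁻¹' (Ioc u v) = Ioc (e.symm u) (e.symm v) := by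
      rw [← hce]; exact e.preimage_Ioc u v
    have h1 : A (e.symm u) = u := by rw [← hce]; exact e.apply_symm_apply u
    have h2 : A (e.symm v) = v := by rw [← hce]; exact e.apply_symm_apply v
    rw [hpre, hμIoc _ _ (e.symm.monotone huv.le), h1, h2, Real.volume_Ioc]

lemma aux_cov (hg : Measurable g) (hν0 : 0 < ν) (hgν : ∀ τ, ν ≤ g τ) (hgM : ∀ τ, |g τ| ≤ M)
    (hA : ∀ t, A t = ∫ s in (0:ℝ)..t, g s)
    (hsm : StrictMono A) (hsurj : Function.Surjective A)
    (f : ℝ → ℝ) (hf : AEStronglyMeasurable f volume)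
    {S : Set ℝ} (hS : MeasurableSet S) :
    ∫ τ in A ⁻¹' S, g τ * f (A τ) = ∫ u in S, f u := by
  have hAm : Measurable A := hsm.monotone.measurable
  have hT : MeasurableSet (A ⁻¹' S) := hAm hS
  set μ := volume.withDensity (fun τ => ((g τ).toNNReal : ENNReal)) with hμ
  have hmap := aux_map hg hν0 hgν hgM hA hsm hsurj
  have h1 : ∫ u in S, f u = ∫ u, f u ∂(Measure.map A (μ.restrict (A ⁻¹' S))) := by
    rw [← Measure.restrict_map hAm hS, hmap]
  have h2 : ∫ u, f u ∂(Measure.map A (μ.restrict (A ⁻¹' S)))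
      = ∫ τ, f (A τ) ∂(μ.restrict (A ⁻¹' S)) := by
    apply integral_map hAm.aemeasurable
    rw [← Measure.restrict_map hAm hS, hmap]
    exact hf.restrict
  have h3 : μ.restrict (A ⁻¹' S)
      = (volume.restrict (A ⁻¹' S)).withDensity (fun τ => ((g τ).toNNReal : ENNReal)) := by
    rw [hμ, restrict_withDensity hT]
  have h4 : ∫ τ, f (A τ) ∂((volume.restrict (A ⁻¹' S)).withDensity
      (fun τ => ((g τ).toNNReal : ENNReal)))
      = ∫ τ, (g τ).toNNReal • f (A τ) ∂(volume.restrict (A ⁻¹' S)) :=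
    integral_withDensity_eq_integral_smul (measurable_real_toNNReal.comp hg) _
  rw [h1, h2, h3, h4]
  apply setIntegral_congr_fun hT
  intro τ _
  simp only [NNReal.smul_def, Real.coe_toNNReal _ ((hν0.le).trans (hgν τ)), smul_eq_mul]

lemma aux_cov_int (hg : Measurable g) (hν0 : 0 < ν) (hgν : ∀ τ, ν ≤ g τ) (hgM : ∀ τ, |g τ| ≤ M)
    (hA : ∀ t, A t = ∫ s in (0:ℝ)..t, g s)
    (hsm : StrictMono A) (hsurj : Function.Surjective A)
    (f : ℝ → ℝ) {S : Set ℝ} (hS : MeasurableSet S)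
    (hfi : IntegrableOn f S) :
    IntegrableOn (fun τ => g τ * f (A τ)) (A ⁻¹' S) := by
  have hAm : Measurable A := hsm.monotone.measurable
  have hT : MeasurableSet (A ⁻¹' S) := hAm hS
  set μ := volume.withDensity (fun τ => ((g τ).toNNReal : ENNReal)) with hμ
  have hmap := aux_map hg hν0 hgν hgM hA hsm hsurj
  have h0 : Integrable f ((Measure.map A μ).restrict S) := by rw [hmap]; exact hfi
  rw [Measure.restrict_map hAm hS] at h0
  rw [(integrable_map_measure ?_ hAm.aemeasurable.restrict)] at h0
  · rw [hμ, restrict_withDensity hT] at h0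
    rw [integrable_withDensity_iff] at h0
    · apply h0.congr
      refine Filter.Eventually.of_forall fun τ => ?_
      simp only [Function.comp]
      rw [ENNReal.coe_toReal, Real.coe_toNNReal _ ((hν0.le).trans (hgν τ)), mul_comm]
    · exact (measurable_real_toNNReal.comp hg).coe_nnreal_ennreal
    · exact Filter.Eventually.of_forall fun τ => ENNReal.coe_lt_top
  · rw [← Measure.restrict_map hAm hS, hmap]
    exact hfi.aestronglyMeasurable

lemma aux_preimage_Iic (hsm : StrictMono A) (t : ℝ) : A ⁻¹' (Iic (A t)) = Iic t := by
  ext τ; simp [hsm.le_iff_le]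

lemma aux_preimage_Ioc (hsm : StrictMono A) (s t : ℝ) :
    A ⁻¹' (Ioc (A s) (A t)) = Ioc s t := by
  ext τ; simp [hsm.le_iff_le, hsm.lt_iff_lt]

lemma aux_int_exp_Iic (c d : ℝ) : ∫ u in Iic c, Real.exp (u - d) = Real.exp (c - d) := by
  simp_rw [Real.exp_sub]
  rw [MeasureTheory.integral_div, integral_exp_Iic]

lemma aux_intOn_exp_Iic (c d : ℝ) : IntegrableOn (fun u => Real.exp (u - d)) (Iic c) := by
  apply ((integrableOn_exp_Iic c).div_const (Real.exp d)).congr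
  exact Filter.Eventually.of_forall fun u => (Real.exp_sub u d).symm

lemma aux_int_exp_Ioc {p q : ℝ} (hpq : p ≤ q) (c : ℝ) :
    ∫ u in Ioc p q, Real.exp (c - u) = Real.exp (c - p) - Real.exp (c - q) := by
  rw [← intervalIntegral.integral_of_le hpq, intervalIntegral.integral_comp_sub_left
    (fun u => Real.exp u) c, integral_exp]

lemma aux_Iic_eq (hg : Measurable g) (hν0 : 0 < ν) (hgν : ∀ τ, ν ≤ g τ) (hgM : ∀ τ, |g τ| ≤ M)
    (hA : ∀ t, A t = ∫ s in (0:ℝ)..t, g s)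
    (hsm : StrictMono A) (hsurj : Function.Surjective A) (t c : ℝ) :
    ∫ τ in Iic t, g τ * Real.exp (A τ - c) = Real.exp (A t - c) := by
  have := aux_cov hg hν0 hgν hgM hA hsm hsurj (fun u => Real.exp (u - c))
    (Real.continuous_exp.comp (continuous_id.sub continuous_const)).aestronglyMeasurable
    (measurableSet_Iic (a := A t))
  rw [aux_preimage_Iic hsm] at this
  rw [this, aux_int_exp_Iic]

lemma aux_intOn_gexp_Iic (hg : Measurable g) (hν0 : 0 < ν) (hgν : ∀ τ, ν ≤ g τ)
    (hgM : ∀ τ, |g τ| ≤ M) (hA : ∀ t, A t = ∫ s in (0:ℝ)..t, g s)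
    (hsm : StrictMono A) (hsurj : Function.Surjective A) (t c : ℝ) :
    IntegrableOn (fun τ => g τ * Real.exp (A τ - c)) (Iic t) := by
  have := aux_cov_int hg hν0 hgν hgM hA hsm hsurj (fun u => Real.exp (u - c))
    (measurableSet_Iic (a := A t)) (aux_intOn_exp_Iic (A t) c)
  rwa [aux_preimage_Iic hsm] at this

lemma aux_Ioc_eq (hg : Measurable g) (hν0 : 0 < ν) (hgν : ∀ τ, ν ≤ g τ) (hgM : ∀ τ, |g τ| ≤ M)
    (hA : ∀ t, A t = ∫ s in (0:ℝ)..t, g s)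
    (hsm : StrictMono A) (hsurj : Function.Surjective A) {s t : ℝ} (hst : s ≤ t) (c : ℝ) :
    ∫ τ in Ioc s t, g τ * Real.exp (c - A τ)
      = Real.exp (c - A s) - Real.exp (c - A t) := by
  have := aux_cov hg hν0 hgν hgM hA hsm hsurj (fun u => Real.exp (c - u))
    (Real.continuous_exp.comp (continuous_const.sub continuous_id)).aestronglyMeasurable
    (measurableSet_Ioc (a := A s) (b := A t))
  rw [aux_preimage_Ioc hsm] at this
  rw [this, aux_int_exp_Ioc (hsm.monotone hst)]

end dmsAux

/-- convergence property of Theorem 1: the improper integral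
`P̄_t = ∫_{−∞}^t exp(−∫_τ^t K(V_s) ds)·k01(V_τ) dτ` converges, takes values in
`[0,1]`, solves the DMS ODE (in Carathéodory integral form) on all of `ℝ`, is
the unique bounded (continuous) entire solution, and every solution started at
any initial value at time `t₀` converges to `P̄_t` as `t₀ → −∞`. -/
theorem dms_unique_bounded_entire_solution
    (k01 k10 K : ℝ → ℝ)
    (hk01c : Continuous k01) (hk10c : Continuous k10)
    (hk01 : ∀ v, 0 ≤ k01 v) (hk10 : ∀ v, 0 ≤ k10 v)
    (hK : ∀ v, K v = k01 v + k10 v)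
    (a b ν : ℝ) (hab : a ≤ b)
    (hKpos : ∀ v ∈ Set.Icc a b, 0 < K v)
    (hν : IsLeast (K '' Set.Icc a b) ν) (hν0 : 0 < ν)
    (V : ℝ → ℝ) (hVm : Measurable V) (hVab : ∀ t, V t ∈ Set.Icc a b)
    (Φ : ℝ → ℝ → ℝ) (hΦ : ∀ t τ, Φ t τ = Real.exp (-∫ s in τ..t, K (V s)))
    (Pbar : ℝ → ℝ)
    (hPbar : ∀ t, Pbar t = ∫ τ in Set.Iic t, Φ t τ * k01 (V τ)) :
    (∀ t : ℝ, IntegrableOn (fun τ => Φ t τ * k01 (V τ)) (Set.Iic t)) ∧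
    (∀ t : ℝ, 0 ≤ Pbar t ∧ Pbar t ≤ 1) ∧
    Continuous Pbar ∧
    (∀ s t : ℝ, Pbar t = Pbar s + ∫ τ in s..t, (k01 (V τ) - K (V τ) * Pbar τ)) ∧
    (∀ Q : ℝ → ℝ, Continuous Q → (∃ C : ℝ, ∀ t, |Q t| ≤ C) →
      (∀ s t : ℝ, Q t = Q s + ∫ τ in s..t, (k01 (V τ) - K (V τ) * Q τ)) →
      Q = Pbar) ∧
    (∀ p t : ℝ, Filter.Tendsto
      (fun t₀ => Φ t t₀ * p + ∫ τ in t₀..t, Φ t τ * k01 (V τ))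
      Filter.atBot (nhds (Pbar t))) := by
  classical
  -- ## Setup
  have hKc : Continuous K := by
    have hfun : K = fun v => k01 v + k10 v := funext hK
    rw [hfun]; exact hk01c.add hk10c
  set g : ℝ → ℝ := fun τ => K (V τ) with hgdef
  have hg : Measurable g := hKc.measurable.comp hVm
  obtain ⟨vM, hvM, hvMmax⟩ :=
    isCompact_Icc.exists_isMaxOn (Set.nonempty_Icc.mpr hab) hKc.continuousOn
  set M := K vM with hMdef
  have hgM' : ∀ τ, g τ ≤ M := fun τ => hvMmax (hVab τ)
  have hgν : ∀ τ, ν ≤ g τ := fun τ => hν.2 ⟨V τ, hVab τ, rfl⟩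
  have hgM : ∀ τ, |g τ| ≤ M := fun τ =>
    abs_le.mpr ⟨by nlinarith [hgν τ, hgM' τ, hν0], hgM' τ⟩
  have hM0 : 0 < M := lt_of_lt_of_le hν0 ((hgν 0).trans (hgM' 0))
  have hk01V : ∀ τ, 0 ≤ k01 (V τ) := fun τ => hk01 _
  have hk01g : ∀ τ, k01 (V τ) ≤ g τ := fun τ => by
    rw [hgdef]; simp only [hK (V τ)]; nlinarith [hk10 (V τ)]
  have hk01M : ∀ τ, |k01 (V τ)| ≤ M := fun τ => by
    rw [abs_of_nonneg (hk01V τ)]; exact (hk01g τ).trans (hgM' τ)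
  set A : ℝ → ℝ := fun t => ∫ s in (0:ℝ)..t, g s with hAdef
  have hA : ∀ t, A t = ∫ s in (0:ℝ)..t, g s := fun _ => rfl
  have hsm : StrictMono A := aux_A_smono hg hν0 hgν hgM hA
  have hsurj : Function.Surjective A := aux_A_surj hg hν0 hgν hgM hA
  have hAcont : Continuous A := aux_A_cont hg hgM hA
  have hΦA : ∀ t τ, Φ t τ = Real.exp (A τ - A t) := by
    intro t τ
    rw [hΦ]
    congr 1
    have := aux_A_sub hg hgM hA τ t
    rw [hgdef] at this
    rw [← this]; ring
  have hk01m : Measurable fun τ => k01 (V τ) := hk01c.measurable.comp hVm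
  -- integrability of the main integrand
  have hint : ∀ t c : ℝ, IntegrableOn (fun τ => Real.exp (A τ - c) * k01 (V τ)) (Iic t) := by
    intro t c
    apply Integrable.mono' ((aux_intOn_gexp_Iic hg hν0 hgν hgM hA hsm hsurj t c))
    · exact ((Real.continuous_exp.comp (hAcont.sub continuous_const)).measurable.mul
        hk01m).aestronglyMeasurable.restrict
    · refine Filter.Eventually.of_forall fun τ => ?_
      have h1 : 0 ≤ Real.exp (A τ - c) * k01 (V τ) :=
        mul_nonneg (Real.exp_pos _).le (hk01V τ)
      rw [Real.norm_eq_abs, abs_of_nonneg h1, mul_comm (g τ)]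
      exact mul_le_mul_of_nonneg_left (hk01g τ) (Real.exp_pos _).le
  have hPbarA : ∀ t, Pbar t = ∫ τ in Iic t, Real.exp (A τ - A t) * k01 (V τ) := by
    intro t
    rw [hPbar t]
    apply setIntegral_congr_fun measurableSet_Iic
    intro τ _
    simp only [hΦA]
  -- ## Conjunct 1
  have hC1 : ∀ t : ℝ, IntegrableOn (fun τ => Φ t τ * k01 (V τ)) (Set.Iic t) := by
    intro t
    apply (hint t (A t)).congr
    exact Filter.Eventually.of_forall fun τ => by simp only [hΦA]
  -- ## Conjunct 2
  have hC2 : ∀ t : ℝ, 0 ≤ Pbar t ∧ Pbar t ≤ 1 := by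
    intro t
    constructor
    · rw [hPbarA t]
      exact setIntegral_nonneg measurableSet_Iic
        (fun τ _ => mul_nonneg (Real.exp_pos _).le (hk01V τ))
    · rw [hPbarA t]
      have h1 : (∫ τ in Iic t, Real.exp (A τ - A t) * k01 (V τ))
          ≤ ∫ τ in Iic t, g τ * Real.exp (A τ - A t) := by
        apply setIntegral_mono (hint t (A t)) (aux_intOn_gexp_Iic hg hν0 hgν hgM hA hsm hsurj t (A t))
        intro τ
        dsimp only
        rw [mul_comm (g τ)]
        exact mul_le_mul_of_nonneg_left (hk01g τ) (Real.exp_pos _).le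
      rw [aux_Iic_eq hg hν0 hgν hgM hA hsm hsurj t (A t), sub_self, Real.exp_zero] at h1
      exact h1
  -- ## Conjunct 3
  have hWint : ∀ t : ℝ, IntegrableOn (fun σ => Real.exp (A σ) * k01 (V σ)) (Iic t) := by
    intro t
    apply (hint t 0).congr
    exact Filter.Eventually.of_forall fun τ => by simp only [sub_zero]
  have hWii : ∀ p q : ℝ, IntervalIntegrable (fun σ => Real.exp (A σ) * k01 (V σ)) volume p q := by
    intro p q
    rw [intervalIntegrable_iff]
    exact (hWint (max p q)).mono_set ((Set.Ioc_subset_Iic_self).trans (Iic_subset_Iic.mpr le_rfl))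
  have hPW : ∀ t, Pbar t = Real.exp (-A t) *
      ((∫ σ in Iic 0, Real.exp (A σ) * k01 (V σ)) + ∫ σ in (0:ℝ)..t, Real.exp (A σ) * k01 (V σ)) := by
    intro t
    have hsub := integral_Iic_sub_Iic (hWint 0) (hWint t)
    rw [hPbarA t]
    have h2 : ∀ σ : ℝ, Real.exp (A σ - A t) * k01 (V σ)
        = Real.exp (-A t) * (Real.exp (A σ) * k01 (V σ)) := by
      intro σ
      rw [show A σ - A t = -A t + A σ by ring, Real.exp_add]; ring
    calc ∫ τ in Iic t, Real.exp (A τ - A t) * k01 (V τ)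
        = ∫ τ in Iic t, Real.exp (-A t) * (Real.exp (A τ) * k01 (V τ)) := by
          apply setIntegral_congr_fun measurableSet_Iic; intro τ _; exact h2 τ
      _ = Real.exp (-A t) * ∫ τ in Iic t, Real.exp (A τ) * k01 (V τ) := by
          rw [MeasureTheory.integral_const_mul]
      _ = _ := by rw [← hsub]; ring
  have hC3 : Continuous Pbar := by
    have hcont : Continuous fun t => Real.exp (-A t) *
        ((∫ σ in Iic 0, Real.exp (A σ) * k01 (V σ)) +
          ∫ σ in (0:ℝ)..t, Real.exp (A σ) * k01 (V σ)) := by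
      apply (Real.continuous_exp.comp hAcont.neg).mul
      exact continuous_const.add (intervalIntegral.continuous_primitive hWii 0)
    exact hcont.congr fun t => (hPW t).symm
  -- ## more shared tools
  have hgmulii : ∀ (h : ℝ → ℝ), Continuous h → ∀ p q : ℝ,
      IntervalIntegrable (fun τ => g τ * h τ) volume p q := by
    intro h hh p q
    obtain ⟨B, hB⟩ := (isCompact_uIcc (a := p) (b := q)).exists_bound_of_continuousOn
      hh.continuousOn
    rw [intervalIntegrable_iff]
    apply aux_bddIntegrableOn (hg.mul hh.measurable).aestronglyMeasurable measurableSet_uIoc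
      (C := M * B)
    · show volume (Ioc (p ⊓ q) (p ⊔ q)) ≠ ⊤
      rw [Real.volume_Ioc]; exact ENNReal.ofReal_ne_top
    · intro τ hτ
      rw [Pi.mul_apply, abs_mul]
      have h1 : |h τ| ≤ B := by
        have := hB τ (uIoc_subset_uIcc hτ); rwa [Real.norm_eq_abs] at this
      exact mul_le_mul (hgM τ) h1 (abs_nonneg _) hM0.le
  have hPabs : ∀ τ, |Pbar τ| ≤ 1 := fun τ =>
    abs_le.mpr ⟨by linarith [(hC2 τ).1], (hC2 τ).2⟩
  have hsplit : ∀ s t : ℝ, s ≤ t → Pbar t = Real.exp (A s - A t) * Pbar s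
      + ∫ σ in Ioc s t, Real.exp (A σ - A t) * k01 (V σ) := by
    intro s t hst
    rw [hPbarA t, ← Set.Iic_union_Ioc_eq_Iic hst,
      setIntegral_union (Set.Iic_disjoint_Ioc le_rfl) measurableSet_Ioc (hint s (A t))
        ((hint t (A t)).mono_set Set.Ioc_subset_Iic_self)]
    congr 1
    rw [hPbarA s, ← MeasureTheory.integral_const_mul]
    apply setIntegral_congr_fun measurableSet_Iic
    intro σ _
    dsimp only
    rw [show A σ - A t = (A s - A t) + (A σ - A s) by ring, Real.exp_add]
    ring
  set J' : ℝ → ℝ → ℝ :=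
    fun s τ => Real.exp (-A τ) * ∫ σ in s..τ, Real.exp (A σ) * k01 (V σ) with hJ'def
  have hJ'cont : ∀ s : ℝ, Continuous (J' s) := fun s =>
    (Real.continuous_exp.comp hAcont.neg).mul (intervalIntegral.continuous_primitive hWii s)
  have hsplit' : ∀ s τ : ℝ, s ≤ τ →
      Pbar τ = Real.exp (A s - A τ) * Pbar s + J' s τ := by
    intro s τ hsτ
    rw [hsplit s τ hsτ]
    congr 1
    rw [hJ'def]
    dsimp only
    rw [intervalIntegral.integral_of_le hsτ, ← MeasureTheory.integral_const_mul]
    apply setIntegral_congr_fun measurableSet_Ioc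
    intro σ _
    dsimp only
    rw [show A σ - A τ = -A τ + A σ by ring, Real.exp_add]
    ring
  -- ## Conjunct 4
  have hC4 : ∀ s t : ℝ, Pbar t = Pbar s + ∫ τ in s..t, (k01 (V τ) - K (V τ) * Pbar τ) := by
    have hgK : ∀ τ : ℝ, K (V τ) = g τ := fun τ => rfl
    have hk01ii : ∀ p q : ℝ, IntervalIntegrable (fun τ => k01 (V τ)) volume p q :=
      fun p q => IntervalIntegrable.mono_fun' intervalIntegrable_const
        hk01m.aestronglyMeasurable (Filter.Eventually.of_forall fun τ => hk01M τ)
    have main : ∀ s t : ℝ, s ≤ t →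
        Pbar t = Pbar s + ∫ τ in s..t, (k01 (V τ) - g τ * Pbar τ) := by
      intro s t hst
      have hIocmeas : MeasurableSet (Ioc s t) := measurableSet_Ioc
      have hfin : volume (Ioc s t) ≠ ⊤ := by rw [Real.volume_Ioc]; exact ENNReal.ofReal_ne_top
      set c := Real.exp (A s - A t) with hc
      set I1 := ∫ σ in Ioc s t, k01 (V σ) with hI1
      set I2 := ∫ σ in Ioc s t, Real.exp (A σ - A t) * k01 (V σ) with hI2
      have hI1int : IntegrableOn (fun σ => k01 (V σ)) (Ioc s t) :=
        aux_bddIntegrableOn hk01m.aestronglyMeasurable hIocmeas hfin (fun τ _ => hk01M τ)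
      have hI2int : IntegrableOn (fun σ => Real.exp (A σ - A t) * k01 (V σ)) (Ioc s t) :=
        (hint t (A t)).mono_set Set.Ioc_subset_Iic_self
      have hF1 : Pbar t = c * Pbar s + I2 := hsplit s t hst
      obtain ⟨B, hB⟩ := (isCompact_Icc (a := s) (b := t)).exists_bound_of_continuousOn
        (hJ'cont s).continuousOn
      -- Fubini computation
      set F : ℝ → ℝ → ℝ :=
        fun τ σ => if σ ≤ τ then g τ * Real.exp (A σ - A τ) * k01 (V σ) else 0 with hFdef
      have hFmeas : Measurable (Function.uncurry F) := by
        apply Measurable.ite (measurableSet_le measurable_snd measurable_fst)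
        · exact ((hg.comp measurable_fst).mul (Real.measurable_exp.comp
            (((hAcont.measurable).comp measurable_snd).sub
              ((hAcont.measurable).comp measurable_fst)))).mul (hk01m.comp measurable_snd)
        · exact measurable_const
      have instFin : IsFiniteMeasure (volume.restrict (Ioc s t)) :=
        ⟨by rw [Measure.restrict_apply_univ, Real.volume_Ioc]; exact ENNReal.ofReal_lt_top⟩
      have hFint : Integrable (Function.uncurry F)
          ((volume.restrict (Ioc s t)).prod (volume.restrict (Ioc s t))) := by
        apply Integrable.mono' (integrable_const (M * M)) hFmeas.aestronglyMeasurable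
        refine Filter.Eventually.of_forall fun p => ?_
        rcases p with ⟨τ, σ⟩
        show ‖F τ σ‖ ≤ M * M
        rw [hFdef]
        dsimp only
        by_cases h : σ ≤ τ
        · rw [if_pos h, Real.norm_eq_abs]
          have he0 : (0:ℝ) < Real.exp (A σ - A τ) := Real.exp_pos _
          have he : Real.exp (A σ - A τ) ≤ 1 := by
            rw [Real.exp_le_one_iff]
            have := hsm.monotone h; linarith
          have hnn : 0 ≤ g τ * Real.exp (A σ - A τ) * k01 (V σ) :=
            mul_nonneg (mul_nonneg (hν0.le.trans (hgν τ)) he0.le) (hk01V σ)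
          rw [abs_of_nonneg hnn]
          have h1 : g τ * Real.exp (A σ - A τ) ≤ M :=
            calc g τ * Real.exp (A σ - A τ) ≤ M * 1 :=
                  mul_le_mul (hgM' τ) he he0.le hM0.le
              _ = M := mul_one M
          calc g τ * Real.exp (A σ - A τ) * k01 (V σ) ≤ M * k01 (V σ) :=
                mul_le_mul_of_nonneg_right h1 (hk01V σ)
            _ ≤ M * M := mul_le_mul_of_nonneg_left ((hk01g σ).trans (hgM' σ)) hM0.le
        · rw [if_neg h]
          simp only [norm_zero]
          positivity
      have hswap := MeasureTheory.integral_integral_swap hFint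
      have hL : ∀ τ ∈ Ioc s t, (∫ σ in Ioc s t, F τ σ) = g τ * J' s τ := by
        intro τ hτ
        have h1 : (fun σ => F τ σ)
            = (Iic τ).indicator (fun σ => g τ * Real.exp (A σ - A τ) * k01 (V σ)) := by
          funext σ
          rw [Set.indicator_apply, hFdef]
          simp only [Set.mem_Iic]
        rw [h1, setIntegral_indicator measurableSet_Iic, Set.Ioc_inter_Iic,
          min_eq_right hτ.2]
        calc ∫ σ in Ioc s τ, g τ * Real.exp (A σ - A τ) * k01 (V σ)
            = ∫ σ in Ioc s τ, (g τ * Real.exp (-A τ)) * (Real.exp (A σ) * k01 (V σ)) := by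
              apply setIntegral_congr_fun measurableSet_Ioc
              intro σ _
              dsimp only
              rw [show A σ - A τ = -A τ + A σ by ring, Real.exp_add]
              ring
          _ = (g τ * Real.exp (-A τ)) * ∫ σ in Ioc s τ, Real.exp (A σ) * k01 (V σ) :=
              MeasureTheory.integral_const_mul _ _
          _ = g τ * J' s τ := by
              rw [hJ'def]
              dsimp only
              rw [intervalIntegral.integral_of_le hτ.1.le]
              ring
      have hR : ∀ σ ∈ Ioc s t, (∫ τ in Ioc s t, F τ σ)
          = k01 (V σ) - Real.exp (A σ - A t) * k01 (V σ) := by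
        intro σ hσ
        have h1 : (fun τ => F τ σ) = (Ici σ).indicator
            (fun τ => (k01 (V σ) * Real.exp (A σ)) * (g τ * Real.exp (0 - A τ))) := by
          funext τ
          rw [Set.indicator_apply, hFdef]
          simp only [Set.mem_Ici]
          by_cases h : σ ≤ τ
          · rw [if_pos h, if_pos h,
              show A σ - A τ = A σ + (0 - A τ) by ring, Real.exp_add]
            ring
          · rw [if_neg h, if_neg h]
        rw [h1, setIntegral_indicator measurableSet_Ici]
        have h2 : Ioc s t ∩ Ici σ = Icc σ t := by
          ext τ
          simp only [Set.mem_inter_iff, Set.mem_Ioc, Set.mem_Ici, Set.mem_Icc]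
          constructor
          · rintro ⟨⟨_, h2⟩, h3⟩; exact ⟨h3, h2⟩
          · rintro ⟨h3, h2⟩; exact ⟨⟨lt_of_lt_of_le hσ.1 h3, h2⟩, h3⟩
        rw [h2, MeasureTheory.integral_Icc_eq_integral_Ioc, MeasureTheory.integral_const_mul,
          aux_Ioc_eq hg hν0 hgν hgM hA hsm hsurj hσ.2 0]
        have e1 : Real.exp (A σ) * Real.exp (0 - A σ) = 1 := by
          rw [← Real.exp_add]; norm_num
        have e2 : Real.exp (A σ) * Real.exp (0 - A t) = Real.exp (A σ - A t) := by
          rw [← Real.exp_add]; congr 1; ring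
        calc (k01 (V σ) * Real.exp (A σ)) * (Real.exp (0 - A σ) - Real.exp (0 - A t))
            = k01 (V σ) * (Real.exp (A σ) * Real.exp (0 - A σ))
              - k01 (V σ) * (Real.exp (A σ) * Real.exp (0 - A t)) := by ring
          _ = k01 (V σ) - Real.exp (A σ - A t) * k01 (V σ) := by rw [e1, e2]; ring
      have hFub : ∫ τ in Ioc s t, g τ * J' s τ = I1 - I2 := by
        calc ∫ τ in Ioc s t, g τ * J' s τ
            = ∫ τ in Ioc s t, ∫ σ in Ioc s t, F τ σ :=
              (setIntegral_congr_fun hIocmeas fun τ hτ => hL τ hτ).symm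
          _ = ∫ σ in Ioc s t, ∫ τ in Ioc s t, F τ σ := hswap
          _ = ∫ σ in Ioc s t, (k01 (V σ) - Real.exp (A σ - A t) * k01 (V σ)) :=
              setIntegral_congr_fun hIocmeas fun σ hσ => hR σ hσ
          _ = I1 - I2 := MeasureTheory.integral_sub hI1int hI2int
      -- the g·Pbar integral
      have int1 : IntegrableOn (fun τ => g τ * (Real.exp (A s - A τ) * Pbar s)) (Ioc s t) := by
        apply aux_bddIntegrableOn (hg.mul ((Real.measurable_exp.comp
          ((measurable_const).sub hAcont.measurable)).mul measurable_const)).aestronglyMeasurable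
          hIocmeas hfin (C := M * |Pbar s|)
        intro τ hτ
        simp only [Pi.mul_apply, Function.comp_apply]
        rw [abs_mul, abs_mul, Real.abs_exp]
        have he : Real.exp (A s - A τ) ≤ 1 := by
          rw [Real.exp_le_one_iff]
          have := hsm.monotone hτ.1.le; linarith
        calc |g τ| * (Real.exp (A s - A τ) * |Pbar s|)
            ≤ M * (1 * |Pbar s|) := by
              apply mul_le_mul (hgM τ) ?_ (by positivity) hM0.le
              exact mul_le_mul_of_nonneg_right he (abs_nonneg _)
          _ = M * |Pbar s| := by ring
      have int2 : IntegrableOn (fun τ => g τ * J' s τ) (Ioc s t) := by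
        apply aux_bddIntegrableOn (hg.mul (hJ'cont s).measurable).aestronglyMeasurable
          hIocmeas hfin (C := M * B)
        intro τ hτ
        rw [Pi.mul_apply, abs_mul]
        have h1 : |J' s τ| ≤ B := by
          have := hB τ (Set.Ioc_subset_Icc_self hτ); rwa [Real.norm_eq_abs] at this
        exact mul_le_mul (hgM τ) h1 (abs_nonneg _) hM0.le
      have hgP : ∫ τ in s..t, g τ * Pbar τ = Pbar s * (1 - c) + (I1 - I2) := by
        rw [intervalIntegral.integral_of_le hst]
        have step1 : Set.EqOn (fun τ => g τ * Pbar τ)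
            (fun τ => g τ * (Real.exp (A s - A τ) * Pbar s) + g τ * J' s τ) (Ioc s t) := by
          intro τ hτ
          dsimp only
          rw [hsplit' s τ hτ.1.le]
          ring
        rw [setIntegral_congr_fun hIocmeas step1, MeasureTheory.integral_add int1 int2, hFub]
        congr 1
        calc ∫ τ in Ioc s t, g τ * (Real.exp (A s - A τ) * Pbar s)
            = (∫ τ in Ioc s t, g τ * Real.exp (A s - A τ)) * Pbar s := by
              rw [← MeasureTheory.integral_mul_const]
              apply setIntegral_congr_fun hIocmeas
              intro τ _
              dsimp only
              ring
          _ = (Real.exp (A s - A s) - Real.exp (A s - A t)) * Pbar s := by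
              rw [aux_Ioc_eq hg hν0 hgν hgM hA hsm hsurj hst (A s)]
          _ = Pbar s * (1 - c) := by rw [sub_self, Real.exp_zero, hc]; ring
      have hsplitInt : ∫ τ in s..t, (k01 (V τ) - g τ * Pbar τ)
          = I1 - (Pbar s * (1 - c) + (I1 - I2)) := by
        rw [intervalIntegral.integral_sub (hk01ii s t) (hgmulii Pbar hC3 s t), hgP,
          intervalIntegral.integral_of_le hst]
      have hgoal : ∫ τ in s..t, (k01 (V τ) - g τ * Pbar τ) = Pbar t - Pbar s := by
        rw [hsplitInt]; rw [hF1]; ring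
      linarith [hgoal]
    intro s t
    simp only [hgK]
    rcases le_total s t with h | h
    · exact main s t h
    · have h1 := main t s h
      rw [intervalIntegral.integral_symm]
      linarith [h1]
  -- decay helper
  have hdecay : ∀ (t c : ℝ),
      Tendsto (fun s : ℝ => Real.exp (ν * (s - t)) * c) atBot (nhds 0) := by
    intro t c
    have h2 : Tendsto (fun s : ℝ => ν * (s - t)) atBot atBot := by
      apply Tendsto.const_mul_atBot hν0
      simpa [sub_eq_add_neg] using tendsto_atBot_add_const_right atBot (-t) tendsto_id
    have h3 := Real.tendsto_exp_atBot.comp h2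
    have h4 := h3.mul_const c
    simpa using h4
  -- ## Conjunct 5
  have hC5 : ∀ Q : ℝ → ℝ, Continuous Q → (∃ C : ℝ, ∀ t, |Q t| ≤ C) →
      (∀ s t : ℝ, Q t = Q s + ∫ τ in s..t, (k01 (V τ) - K (V τ) * Q τ)) → Q = Pbar := by
    rintro Q hQc ⟨C, hC⟩ hQeq
    set D := fun τ => Q τ - Pbar τ with hD
    have hDc : Continuous D := hQc.sub hC3
    have hDb : ∀ τ, |D τ| ≤ C + 1 := by
      intro τ
      calc |Q τ - Pbar τ| ≤ |Q τ| + |Pbar τ| := abs_sub _ _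
        _ ≤ C + 1 := add_le_add (hC τ) (hPabs τ)
    have hgK : ∀ τ : ℝ, K (V τ) = g τ := fun τ => rfl
    have hQii : ∀ s t : ℝ, IntervalIntegrable (fun τ => k01 (V τ) - g τ * Q τ) volume s t :=
      fun s t => ((IntervalIntegrable.mono_fun' intervalIntegrable_const
        hk01m.aestronglyMeasurable (Filter.Eventually.of_forall fun τ => hk01M τ)).sub
        (hgmulii Q hQc s t))
    have hPii : ∀ s t : ℝ, IntervalIntegrable (fun τ => k01 (V τ) - g τ * Pbar τ) volume s t :=
      fun s t => ((IntervalIntegrable.mono_fun' intervalIntegrable_const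
        hk01m.aestronglyMeasurable (Filter.Eventually.of_forall fun τ => hk01M τ)).sub
        (hgmulii Pbar hC3 s t))
    have hDeq : ∀ s t : ℝ, D t = D s - ∫ τ in s..t, g τ * D τ := by
      intro s t
      have h1 := hQeq s t
      have h2 := hC4 s t
      simp only [hgK] at h1 h2
      have h3 : (∫ τ in s..t, (k01 (V τ) - g τ * Q τ))
            - (∫ τ in s..t, (k01 (V τ) - g τ * Pbar τ))
          = - ∫ τ in s..t, g τ * D τ := by
        rw [← intervalIntegral.integral_sub (hQii s t) (hPii s t),
          ← intervalIntegral.integral_neg]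
        apply intervalIntegral.integral_congr
        intro τ _
        dsimp only [hD]
        ring
      rw [hD]
      dsimp only
      linarith [h1, h2, h3]
    have key : ∀ s t : ℝ, s ≤ t → D t = Real.exp (A s - A t) * D s := by
      intro s t hst
      set E := fun τ => Real.exp (A s - A τ) * D s with hE
      have hEc : Continuous E :=
        (Real.continuous_exp.comp (continuous_const.sub hAcont)).mul continuous_const
      have hEeq : ∀ τ : ℝ, s ≤ τ → E τ = D s - ∫ u in s..τ, g u * E u := by
        intro τ hsτ
        have h1 : ∫ u in s..τ, g u * E u
            = (∫ u in Ioc s τ, g u * Real.exp (A s - A u)) * D s := by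
          rw [intervalIntegral.integral_of_le hsτ, ← MeasureTheory.integral_mul_const]
          apply setIntegral_congr_fun measurableSet_Ioc
          intro u _
          dsimp only [hE]
          ring
        rw [h1, aux_Ioc_eq hg hν0 hgν hgM hA hsm hsurj hsτ (A s), hE]
        dsimp only
        rw [sub_self, Real.exp_zero]
        ring
      set F := fun τ => D τ - E τ with hF
      have hFc : Continuous F := hDc.sub hEc
      have hFeq : ∀ τ : ℝ, s ≤ τ → F τ = - ∫ u in s..τ, g u * F u := by
        intro τ hsτ
        have h4 : ∫ u in s..τ, g u * F u
            = (∫ u in s..τ, g u * D u) - ∫ u in s..τ, g u * E u := by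
          rw [← intervalIntegral.integral_sub (hgmulii D hDc s τ) (hgmulii E hEc s τ)]
          apply intervalIntegral.integral_congr
          intro u _
          dsimp only [hF]
          ring
        have h5 := hDeq s τ
        have h6 := hEeq τ hsτ
        rw [hF]
        dsimp only
        linarith [h4, h5, h6]
      obtain ⟨B, hB⟩ := (isCompact_Icc (a := s) (b := t)).exists_bound_of_continuousOn
        hFc.continuousOn
      have claim : ∀ n : ℕ, ∀ τ ∈ Icc s t, |F τ| ≤ B * (M * (τ - s)) ^ n / n.factorial := by
        intro n
        induction n with
        | zero =>
          intro τ hτ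
          have := hB τ hτ
          rw [Real.norm_eq_abs] at this
          simpa using this
        | succ n ih =>
          intro τ hτ
          have hsτ : s ≤ τ := hτ.1
          rw [hFeq τ hsτ, abs_neg]
          have h5 := intervalIntegral.abs_integral_le_integral_abs
            (f := fun u => g u * F u) (μ := volume) hsτ
          have h6 : ∫ u in s..τ, |g u * F u|
              ≤ ∫ u in s..τ, M * (B * (M * (u - s)) ^ n / n.factorial) := by
            apply intervalIntegral.integral_mono_on hsτ (hgmulii F hFc s τ).abs
              (Continuous.intervalIntegrable (by fun_prop) s τ)
            intro u hu
            rw [abs_mul]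
            exact mul_le_mul (hgM u) (ih u ⟨hu.1, hu.2.trans hτ.2⟩)
              (abs_nonneg _) hM0.le
          have h8 : ∫ u in s..τ, (u - s) ^ n = (τ - s) ^ (n + 1) / (n + 1) := by
            rw [intervalIntegral.integral_comp_sub_right (fun x => x ^ n) s]
            rw [integral_pow]
            rw [sub_self]
            rw [zero_pow (Nat.succ_ne_zero n)]
            push_cast
            ring
          have h9 : ∀ u : ℝ, M * (B * (M * (u - s)) ^ n / n.factorial)
              = (M * B * M ^ n / n.factorial) * (u - s) ^ n := by
            intro u
            rw [mul_pow]
            ring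
          have h7 : ∫ u in s..τ, M * (B * (M * (u - s)) ^ n / n.factorial)
              = B * (M * (τ - s)) ^ (n + 1) / (n + 1).factorial := by
            simp_rw [h9]
            rw [intervalIntegral.integral_const_mul, h8, Nat.factorial_succ, mul_pow]
            have hfac : (n.factorial : ℝ) ≠ 0 := Nat.cast_ne_zero.mpr n.factorial_ne_zero
            have hnn : ((n:ℝ) + 1) ≠ 0 := by positivity
            push_cast
            field_simp
            ring
          calc |∫ u in s..τ, g u * F u| ≤ ∫ u in s..τ, |g u * F u| := h5
            _ ≤ ∫ u in s..τ, M * (B * (M * (u - s)) ^ n / n.factorial) := h6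
            _ = B * (M * (τ - s)) ^ (n + 1) / (n + 1).factorial := h7
      have hFt0 : F t = 0 := by
        have hle : ∀ n : ℕ, |F t| ≤ B * (M * (t - s)) ^ n / n.factorial :=
          fun n => claim n t ⟨hst, le_rfl⟩
        have hlim : Tendsto (fun n : ℕ => B * (M * (t - s)) ^ n / n.factorial)
            atTop (nhds 0) := by
          have h1 := FloorSemiring.tendsto_pow_div_factorial_atTop (K := ℝ) (M * (t - s))
          have h2 : (fun n : ℕ => B * (M * (t - s)) ^ n / n.factorial)
              = fun n : ℕ => B * ((M * (t - s)) ^ n / n.factorial) := by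
            funext n; ring
          rw [h2]
          simpa using h1.const_mul B
        have h0 : |F t| ≤ 0 := ge_of_tendsto hlim (Filter.Eventually.of_forall hle)
        exact abs_nonpos_iff.mp h0
      have : D t - E t = 0 := hFt0
      rw [hE] at this
      dsimp only at this
      linarith [this]
    funext t
    have h1 : Tendsto (fun s => Real.exp (A s - A t) * D s) atBot (nhds 0) := by
      apply squeeze_zero_norm' (a := fun s => Real.exp (ν * (s - t)) * (C + 1))
      · filter_upwards [eventually_le_atBot t] with s hs
        rw [Real.norm_eq_abs, abs_mul, Real.abs_exp]
        have hAle : A s - A t ≤ ν * (s - t) := by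
          have := aux_A_lb hg hgν hgM hA hs
          linarith
        exact mul_le_mul (Real.exp_le_exp.mpr hAle) (hDb s) (abs_nonneg _) (Real.exp_pos _).le
      · exact hdecay t (C + 1)
    have h4 : Tendsto (fun _ : ℝ => D t) atBot (nhds 0) := by
      apply h1.congr'
      filter_upwards [eventually_le_atBot t] with s hs
      exact (key s t hs).symm
    have h5 : D t = 0 := tendsto_nhds_unique tendsto_const_nhds h4
    have h6 : Q t - Pbar t = 0 := h5
    linarith [h6]
  -- ## Conjunct 6
  have hC6 : ∀ p t : ℝ, Tendsto
      (fun t₀ => Φ t t₀ * p + ∫ τ in t₀..t, Φ t τ * k01 (V τ)) atBot (nhds (Pbar t)) := by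
    intro p t
    rw [← tendsto_sub_nhds_zero_iff]
    apply squeeze_zero_norm' (a := fun t₀ => Real.exp (ν * (t₀ - t)) * (|p| + 1))
    · filter_upwards [eventually_le_atBot t] with t₀ ht₀
      have hid : (Φ t t₀ * p + ∫ τ in t₀..t, Φ t τ * k01 (V τ)) - Pbar t
          = Real.exp (A t₀ - A t) * (p - Pbar t₀) := by
        have h1 := hsplit t₀ t ht₀
        have h2 : ∫ τ in t₀..t, Φ t τ * k01 (V τ)
            = ∫ σ in Ioc t₀ t, Real.exp (A σ - A t) * k01 (V σ) := by
          rw [intervalIntegral.integral_of_le ht₀]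
          apply setIntegral_congr_fun measurableSet_Ioc
          intro σ _
          simp only [hΦA]
        rw [h2, hΦA, h1]
        ring
      rw [hid, Real.norm_eq_abs, abs_mul, Real.abs_exp]
      have hAle : A t₀ - A t ≤ ν * (t₀ - t) := by
        have := aux_A_lb hg hgν hgM hA ht₀
        linarith
      have hpb : |p - Pbar t₀| ≤ |p| + 1 :=
        (abs_sub _ _).trans (add_le_add le_rfl (hPabs t₀))
      exact mul_le_mul (Real.exp_le_exp.mpr hAle) hpb (abs_nonneg _) (Real.exp_pos _).le
    · exact hdecay t (|p| + 1)
  exact ⟨hC1, hC2, hC3, hC4, hC5, hC6⟩
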